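/- For every condition (τ, S, r) of the measure-theoretic forcing ℙ and every d > 0, there is a condition (τ_d, S_d, r) ≤ (τ, S, r) with S_d ⊆ S and r − λ(Û(τ_d)) ≤ d, where Û(τ) denotes the finite union of basic clopen sets coded by the entries of τ. -/

import Mathlib

open Filter MeasureTheory

namespace Paper

/-- Cantor space, viewed as the compact group `(ℤ/2)^ω` (so that bitwise XOR is addition). -/
abbrev Cantor := ℕ → ZMod 2

/-- The fair-coin (Lebesgue) measure on Cantor space: normalized Haar measure. -/
noncomputable def lam : Measure Cantor :=
  (Measure.addHaar (Set.univ : Set Cantor))⁻¹ • Measure.addHaar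

/-- The basic clopen set determined by a finite binary string. -/
def cyl (σ : List (ZMod 2)) : Set Cantor := {x | ∀ i : Fin σ.length, x i = σ.get i}

noncomputable instance : Encodable (ZMod 2) := Fintype.toEncodable _

noncomputable instance : Denumerable (List (ZMod 2)) :=
  Denumerable.ofEncodableOfInfinite _

/-- A fixed bijection `ℕ → 2^{<ω}`. -/
noncomputable def strOf (n : ℕ) : List (ZMod 2) := Denumerable.ofNat _ n

/-- The open set named by `f ∈ ω^ω`. -/
def opn (f : ℕ → ℕ) : Set Cantor := ⋃ n, cyl (strOf (f n))

/-- The finite union of basic clopen sets coded by the entries of a finite string `σ`. -/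
def Uhat (σ : List ℕ) : Set Cantor := ⋃ i : Fin σ.length, cyl (strOf (σ.get i))

/-- Prepending a finite string to an element of Cantor space. -/
def app (σ : List (ZMod 2)) (x : Cantor) : Cantor :=
  fun n => if h : n < σ.length then σ.get ⟨n, h⟩ else x (n - σ.length)

/-- Bitwise XOR of a finite string with an element of Cantor space. -/
def xorL (σ : List (ZMod 2)) (x : Cantor) : Cantor :=
  fun n => (if h : n < σ.length then σ.get ⟨n, h⟩ else 0) + x n

/-- `A` is a tail set. -/
def IsTailSet (A : Set Cantor) : Prop :=
  ∀ σ τ : List (ZMod 2), σ.length = τ.length → ∀ x : Cantor, app σ x ∈ A → app τ x ∈ A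

/-- A fixed bijection `ℕ → ℚ`. -/
def ratOf (n : ℕ) : ℚ := Denumerable.ofNat ℚ n

/-- `a` is a fast-Cauchy name for the real `r`. -/
def RealName (a : ℕ → ℕ) (r : ℝ) : Prop :=
  Tendsto (fun i => (ratOf (a i) : ℝ)) atTop (nhds r) ∧
    ∀ i j : ℕ, i < j → |(ratOf (a i) : ℝ) - (ratOf (a j) : ℝ)| < (2 : ℝ) ^ (-(i : ℤ))

/-- The `n`-th column of `x`. -/
def col (x : ℕ → ℕ) (n : ℕ) : ℕ → ℕ := fun k => x (Nat.pair n k)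

/-- The name of the `n`-th open set coded in a Schnorr name `x`. -/
def nm (x : ℕ → ℕ) (n : ℕ) : ℕ → ℕ := col x (2 * n)

/-- The name of the measure of the `n`-th open set coded in a Schnorr name `x`. -/
def mv (x : ℕ → ℕ) (n : ℕ) : ℕ → ℕ := col x (2 * n + 1)

/-- `x` is a name for the Schnorr null set `N`. -/
def SchnorrName (x : ℕ → ℕ) (N : Set Cantor) : Prop :=
  N = (⋂ n, opn (nm x n)) ∧
    (∀ n, RealName (mv x n) ((lam (opn (nm x n))).toReal)) ∧
    Tendsto (fun n => lam (opn (nm x n))) atTop (nhds 0)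

end Paper

namespace Paper

/-- The set of names of open sets of measure exactly `q`. -/
def Rset (q : ℝ) : Set (ℕ → ℕ) := {f | lam (opn f) = ENNReal.ofReal q}

/-- Conditions of the measure-theoretic forcing `ℙ` (definability constraints dropped). -/
def IsCond (σ : List ℕ) (R : Set (ℕ → ℕ)) (q : ℝ) : Prop :=
  0 < q ∧ q < 1 / 2 ∧ R.Nonempty ∧ R ⊆ Rset q ∧ ∀ f ∈ R, Uhat σ ⊆ opn f

/-- The extension relation of `ℙ`: `(τ, S, r) ≤ (σ, R, q)`. -/
def Ext (τ : List ℕ) (S : Set (ℕ → ℕ)) (r : ℝ)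
    (σ : List ℕ) (R : Set (ℕ → ℕ)) (q : ℝ) : Prop :=
  σ <+: τ ∧ ∀ f ∈ S, ∃ g ∈ R, opn g ⊆ opn f

end Paper



lemma mem_Uhat {σ : List ℕ} {x : Paper.Cantor} :
    x ∈ Paper.Uhat σ ↔ ∃ m ∈ σ, x ∈ Paper.cyl (Paper.strOf m) := by
  simp only [Paper.Uhat, Set.mem_iUnion, List.mem_iff_get]
  constructor
  · rintro ⟨i, hi⟩; exact ⟨σ.get i, ⟨i, rfl⟩, hi⟩
  · rintro ⟨m, ⟨i, rfl⟩, hm⟩; exact ⟨i, hm⟩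

/-- every condition `(τ, S, r)` of `ℙ` can be extended, for any
`d > 0`, to a condition `(τ_d, S_d, r)` with `S_d ⊆ S` and `r − λ(Û(τ_d)) ≤ d`. -/
theorem stem_almost_exhausts_measure (τ : List ℕ) (S : Set (ℕ → ℕ)) (r : ℝ)
    (hcond : Paper.IsCond τ S r) (d : ℝ) (hd : 0 < d) :
    ∃ (τd : List ℕ) (Sd : Set (ℕ → ℕ)), Paper.IsCond τd Sd r ∧
      Paper.Ext τd Sd r τ S r ∧ Sd ⊆ S ∧
      r - (Paper.lam (Paper.Uhat τd)).toReal ≤ d := by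
  obtain ⟨hr0, hr2, ⟨f, hfS⟩, hRsub, hcov⟩ := hcond
  have hfR : Paper.lam (Paper.opn f) = ENNReal.ofReal r := hRsub hfS
  set A : ℕ → Set Paper.Cantor := fun N => ⋃ i : Fin N, Paper.cyl (Paper.strOf (f i)) with hA
  have hAmono : Monotone A := by
    intro m n hmn x hx
    simp only [hA, Set.mem_iUnion] at hx ⊢
    obtain ⟨i, hi⟩ := hx
    exact ⟨⟨i, lt_of_lt_of_le i.2 hmn⟩, hi⟩
  have hAunion : ⋃ N, A N = Paper.opn f := by
    ext x
    simp only [hA, Set.mem_iUnion, Paper.opn]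
    constructor
    · rintro ⟨N, i, hi⟩; exact ⟨i, hi⟩
    · rintro ⟨n, hn⟩; exact ⟨n + 1, ⟨n, n.lt_succ_self⟩, hn⟩
  have hfin : Paper.lam (Paper.opn f) ≠ ⊤ := by
    rw [hfR]; exact ENNReal.ofReal_ne_top
  have htend : Tendsto (fun N => Paper.lam (A N)) atTop (nhds (Paper.lam (Paper.opn f))) := by
    rw [← hAunion]
    exact MeasureTheory.tendsto_measure_iUnion_atTop hAmono
  have htend2 : Tendsto (fun N => (Paper.lam (A N)).toReal) atTop (nhds r) := by
    have h := (ENNReal.tendsto_toReal hfin).comp htend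
    rwa [hfR, ENNReal.toReal_ofReal hr0.le] at h
  obtain ⟨N, hN⟩ := (htend2.eventually (eventually_gt_nhds (by linarith : r - d < r))).exists
  refine ⟨τ ++ List.ofFn (fun i : Fin N => f i), {f}, ?_, ?_, ?_, ?_⟩
  · refine ⟨hr0, hr2, ⟨f, rfl⟩, ?_, ?_⟩
    · exact Set.singleton_subset_iff.mpr (hRsub hfS)
    · intro g hg
      have hgf : g = f := hg
      subst hgf
      intro x hx
      rw [mem_Uhat] at hx
      obtain ⟨m, hm, hxm⟩ := hx
      rcases List.mem_append.mp hm with hm | hm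
      · exact hcov _ hfS (mem_Uhat.mpr ⟨m, hm, hxm⟩)
      · obtain ⟨i, rfl⟩ := List.mem_ofFn.mp hm
        exact Set.mem_iUnion.mpr ⟨i, hxm⟩
  · refine ⟨List.prefix_append _ _, ?_⟩
    intro g hg
    have hgf : g = f := hg
    subst hgf
    exact ⟨g, hfS, subset_rfl⟩
  · exact Set.singleton_subset_iff.mpr hfS
  · have hsub : A N ⊆ Paper.Uhat (τ ++ List.ofFn (fun i : Fin N => f i)) := by
      intro x hx
      simp only [hA, Set.mem_iUnion] at hx
      obtain ⟨i, hi⟩ := hx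
      exact mem_Uhat.mpr ⟨f i, List.mem_append.mpr (Or.inr (List.mem_ofFn.mpr ⟨i, rfl⟩)), hi⟩
    have hle : Paper.lam (A N) ≤ Paper.lam (Paper.Uhat (τ ++ List.ofFn (fun i : Fin N => f i))) :=
      measure_mono hsub
    have hUfin : Paper.lam (Paper.Uhat (τ ++ List.ofFn (fun i : Fin N => f i))) ≠ ⊤ := by
      refine ne_top_of_le_ne_top hfin (measure_mono ?_)
      intro x hx
      rw [mem_Uhat] at hx
      obtain ⟨m, hm, hxm⟩ := hx
      rcases List.mem_append.mp hm with hm | hm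
      · exact hcov f hfS (mem_Uhat.mpr ⟨m, hm, hxm⟩)
      · obtain ⟨i, rfl⟩ := List.mem_ofFn.mp hm
        exact Set.mem_iUnion.mpr ⟨i, hxm⟩
    have := ENNReal.toReal_mono hUfin hle
    linarith
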